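/- If A is a closed game subset of a compact topological group G, then the associated tournament Â = {(x,y) : x⁻¹y ∈ A} is arc cyclic: for every arc (x,y) with x⁻¹y ∈ A \ {e}, there exists z such that x → y → z → x. -/

import Mathlib

open Filter

/-- In a compact topological group, if `a^n ∈ A` for all `n ≥ 1` with `A` closed,
then `a⁻¹ ∈ A`. -/
lemma inv_mem_of_pow_mem {G : Type*} [Group G] [TopologicalSpace G]
    [IsTopologicalGroup G] [CompactSpace G] (A : Set G) (hclosed : IsClosed A)
    (a : G) (h : ∀ n : ℕ, 1 ≤ n → a ^ n ∈ A) : a⁻¹ ∈ A := by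
  have hcp : MapClusterPt (a ^ (-1 : ℤ)) atTop (a ^ · : ℕ → G) :=
    mapClusterPt_self_zpow_atTop_pow a (-1)
  rw [zpow_neg_one] at hcp
  rw [← hclosed.closure_eq]
  rw [mem_closure_iff_nhds]
  intro U hU
  have := (mapClusterPt_iff_frequently.mp hcp) U hU
  rcases frequently_atTop.mp this 1 with ⟨n, hn1, hnU⟩
  exact ⟨a ^ n, hnU, h n hn1⟩

/-- The tournament of a closed game subset of a compact topological group is arc cyclic. -/
theorem closed_gameSubset_arcCyclic {G : Type*} [Group G] [TopologicalSpace G]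
    [IsTopologicalGroup G] [CompactSpace G] [T2Space G]
    (A : Set G) (hclosed : IsClosed A)
    (hA : A ∩ A⁻¹ = {1}) (hA' : A ∪ A⁻¹ = Set.univ) :
    ∀ x y : G, x⁻¹ * y ∈ A → x ≠ y →
      ∃ z : G, (y⁻¹ * z ∈ A ∧ y ≠ z) ∧ (z⁻¹ * x ∈ A ∧ z ≠ x) := by
  intro x y hxy hne
  by_contra hcon
  push_neg at hcon
  set a : G := x⁻¹ * y with ha_def
  have ha : a ∈ A := hxy
  have ha1 : a ≠ 1 := by
    intro h
    exact hne (by rwa [ha_def, inv_mul_eq_one] at h)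
  have hone : (1 : G) ∈ A := by
    have : (1 : G) ∈ ({1} : Set G) := rfl
    rw [← hA] at this; exact this.1
  -- key: a⁻¹ ∉ A
  have hainv : a⁻¹ ∉ A := by
    intro h
    have : a⁻¹ ∈ A ∩ A⁻¹ := ⟨h, by simpa using ha⟩
    rw [hA] at this
    exact ha1 (by simpa using this)
  -- all positive powers of a lie in A and are ≠ 1
  have key : ∀ n : ℕ, 1 ≤ n → a ^ n ∈ A ∧ a ^ n ≠ 1 := by
    intro n hn
    induction n with
    | zero => omega
    | succ n ih =>
      rcases Nat.eq_or_lt_of_le hn with h1 | h1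
      · simpa [← h1] using ⟨ha, ha1⟩
      · have hn' : 1 ≤ n := by omega
        obtain ⟨hmem, hne1⟩ := ih hn'
        -- apply the negated conclusion to z = y * a^n
        have hz := hcon (y * a ^ n)
        have hyz : y⁻¹ * (y * a ^ n) ∈ A := by
          rwa [inv_mul_cancel_left]
        have hyne : y ≠ y * a ^ n := by
          intro h
          exact hne1 (by rwa [left_eq_mul] at h)
        have himp : (y * a ^ n)⁻¹ * x ∈ A → y * a ^ n = x := hz ⟨hyz, hyne⟩
        have hyx : y⁻¹ * x = a⁻¹ := by rw [ha_def]; group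
        have hzx : (y * a ^ n)⁻¹ * x = (a ^ (n + 1))⁻¹ := by
          rw [pow_succ, mul_inv_rev (a ^ n) a, mul_inv_rev, mul_assoc, hyx]; group
        have hfalse : y * a ^ n = x → False := by
          intro heq
          apply hainv
          have h2 : a⁻¹ = a ^ n := by rw [← hyx, ← heq, inv_mul_cancel_left]
          rw [h2]; exact hmem
        have hns1 : a ^ (n + 1) ≠ 1 := by
          intro h
          have h3 : (a ^ (n + 1))⁻¹ ∈ A := by rw [h]; simpa using hone
          rw [← hzx] at h3
          exact hfalse (himp h3)
        have hmem1 : a ^ (n + 1) ∈ A := by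
          by_contra hnot
          have hinvmem : (a ^ (n + 1))⁻¹ ∈ A := by
            have h4 : a ^ (n + 1) ∈ A ∪ A⁻¹ := hA' ▸ Set.mem_univ _
            rcases h4 with h | h
            · exact absurd h hnot
            · simpa using h
          rw [← hzx] at hinvmem
          exact absurd (himp hinvmem) (fun h => hfalse h)
        exact ⟨hmem1, hns1⟩
  have : a⁻¹ ∈ A := inv_mem_of_pow_mem A hclosed a (fun n hn => (key n hn).1)
  exact hainv this
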